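/- (Expected per-step decrease, key step of Theorem 4.) Let g : ℝⁿ → ℝ ∪ {+∞} be proper, convex and lower semicontinuous, let S : ℝⁿ → ℝ be continuously differentiable and L-smooth on dom g, and let η ∈ (0, 1/L), δ > 0, σ > 0, w ≥ 1. Let (Ω, F, P) be a probability space, 𝒢 ⊆ F a sub-σ-algebra, Y : Ω → ℝⁿ a 𝒢-measurable square-integrable random vector taking values in dom g, and G : Ω → ℝⁿ square-integrable with ∇S(Y) square-integrable, E[G | 𝒢] = ∇S(Y) a.s. and E[‖G − ∇S(Y)‖² | 𝒢] ≤ σ²/w² a.s. Set Y⁺ = prox_{ηg}(Y − η G) and assume ‖P_η^g(Y; G)‖ ≥ δ/w almost surely, and that S(Y) + g(Y) and S(Y⁺) + g(Y⁺) are integrable. Then E[(S(Y) + g(Y)) − (S(Y⁺) + g(Y⁺)) | 𝒢] ≥ (η/w²)·((1 − ηL)δ²/2 − σ²) almost surely. -/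

import Mathlib

noncomputable section

open Finset MeasureTheory
open scoped RealInnerProductSpace

/-- `g : ℝⁿ → ℝ ∪ {+∞}` is proper, convex and lower semicontinuous. -/
def ProperConvexLsc {n : ℕ} (g : EuclideanSpace ℝ (Fin n) → WithTop ℝ) : Prop :=
  (∃ x, g x ≠ ⊤) ∧ LowerSemicontinuous g ∧
    ∀ x y : EuclideanSpace ℝ (Fin n), ∀ a b : ℝ, 0 ≤ a → 0 ≤ b → a + b = 1 →
      g (a • x + b • y) ≤ (a : WithTop ℝ) * g x + (b : WithTop ℝ) * g y

/-- `p` is a minimizer of `z ↦ η·g(z) + ½‖u − z‖²`. -/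
def IsProxPt {n : ℕ} (g : EuclideanSpace ℝ (Fin n) → WithTop ℝ) (η : ℝ)
    (u p : EuclideanSpace ℝ (Fin n)) : Prop :=
  ∀ z : EuclideanSpace ℝ (Fin n),
    (η : WithTop ℝ) * g p + ((1 / 2 * ‖u - p‖ ^ 2 : ℝ) : WithTop ℝ) ≤
      (η : WithTop ℝ) * g z + ((1 / 2 * ‖u - z‖ ^ 2 : ℝ) : WithTop ℝ)

/-- `prox` is the proximal operator of `ηg`: `prox u` is the unique minimizer of
`z ↦ η·g(z) + ½‖u − z‖²`. -/
def IsProxFun {n : ℕ} (g : EuclideanSpace ℝ (Fin n) → WithTop ℝ) (η : ℝ)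
    (prox : EuclideanSpace ℝ (Fin n) → EuclideanSpace ℝ (Fin n)) : Prop :=
  ∀ u, IsProxPt g η u (prox u) ∧ ∀ q, IsProxPt g η u q → q = prox u

/-- The prox-grad residual `P_η^g(x; d) = (x − prox_{ηg}(x − η d))/η`. -/
def proxRes {n : ℕ} (prox : EuclideanSpace ℝ (Fin n) → EuclideanSpace ℝ (Fin n)) (η : ℝ)
    (x d : EuclideanSpace ℝ (Fin n)) : EuclideanSpace ℝ (Fin n) :=
  η⁻¹ • (x - prox (x - η • d))

/-- Descent lemma along a segment where the gradient is `L`-Lipschitz relative to the base. -/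
lemma descent_lemma {n : ℕ} (S : EuclideanSpace ℝ (Fin n) → ℝ)
    (S' : EuclideanSpace ℝ (Fin n) → EuclideanSpace ℝ (Fin n))
    (hgrad : ∀ x, HasGradientAt S (S' x) x) (hS'cont : Continuous S')
    (L : ℝ) (x y : EuclideanSpace ℝ (Fin n))
    (hLip : ∀ t ∈ Set.Icc (0:ℝ) 1, ‖S' (x + t • (y - x)) - S' x‖ ≤ L * (t * ‖y - x‖)) :
    S y ≤ S x + ⟪S' x, y - x⟫ + L / 2 * ‖y - x‖ ^ 2 := by
  set h : EuclideanSpace ℝ (Fin n) := y - x with hh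
  set ψ : ℝ → ℝ := fun t => ⟪S' (x + t • h), h⟫ with hψ
  have hcontline : Continuous (fun t : ℝ => x + t • h) :=
    continuous_const.add (continuous_id.smul continuous_const)
  have hcontψ : Continuous ψ :=
    Continuous.inner (hS'cont.comp hcontline) continuous_const
  have hderiv : ∀ t ∈ Set.uIcc (0:ℝ) 1,
      HasDerivAt (fun t => S (x + t • h)) (ψ t) t := by
    intro t _
    have hline : HasDerivAt (fun t : ℝ => x + t • h) h t := by
      simpa using ((hasDerivAt_id t).smul_const h).const_add x
    have := (hgrad (x + t • h)).hasFDerivAt.comp_hasDerivAt t hline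
    simpa [ψ, InnerProductSpace.toDual_apply_apply, Function.comp_def] using this
  have hFTC : ∫ t in (0:ℝ)..1, ψ t = S (x + (1:ℝ) • h) - S (x + (0:ℝ) • h) := by
    simpa using intervalIntegral.integral_eq_sub_of_hasDerivAt hderiv
      (hcontψ.intervalIntegrable 0 1)
  have hxy : x + (1:ℝ) • h = y := by simp [hh]
  have hx0 : x + (0:ℝ) • h = x := by simp
  have hcontg : Continuous (fun t : ℝ => ⟪S' x, h⟫ + L * ‖h‖ ^ 2 * t) :=
    continuous_const.add (continuous_const.mul continuous_id)
  have hbound : ∫ t in (0:ℝ)..1, ψ t ≤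
      ∫ t in (0:ℝ)..1, (⟪S' x, h⟫ + L * ‖h‖ ^ 2 * t) := by
    apply intervalIntegral.integral_mono_on zero_le_one (hcontψ.intervalIntegrable 0 1)
      (hcontg.intervalIntegrable 0 1)
    intro t ht
    have heq : ψ t - ⟪S' x, h⟫ = ⟪S' (x + t • h) - S' x, h⟫ := by
      simp [ψ, inner_sub_left]
    have h1 : ⟪S' (x + t • h) - S' x, h⟫ ≤ ‖S' (x + t • h) - S' x‖ * ‖h‖ :=
      real_inner_le_norm _ _
    have h2 := hLip t ht
    nlinarith [norm_nonneg h, norm_nonneg (S' (x + t • h) - S' x), ht.1]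
  have hval : ∫ t in (0:ℝ)..1, (⟪S' x, h⟫ + L * ‖h‖ ^ 2 * t)
      = ⟪S' x, h⟫ + L / 2 * ‖h‖ ^ 2 := by
    have hil : IntervalIntegrable (fun t : ℝ => L * ‖h‖ ^ 2 * t) MeasureTheory.volume 0 1 :=
      (continuous_const.mul continuous_id').intervalIntegrable 0 1
    have hic : IntervalIntegrable (fun _ : ℝ => ⟪S' x, h⟫) MeasureTheory.volume 0 1 :=
      continuous_const.intervalIntegrable 0 1
    rw [intervalIntegral.integral_add hic hil, intervalIntegral.integral_const_mul]
    simp only [intervalIntegral.integral_const, smul_eq_mul, integral_id]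
    ring
  rw [hFTC, hxy, hx0] at hbound
  rw [hval] at hbound
  linarith

/-- Three-point-type inequality for a prox point. -/
lemma prox_ineq {n : ℕ} (g : EuclideanSpace ℝ (Fin n) → WithTop ℝ)
    (hconv : ∀ x y : EuclideanSpace ℝ (Fin n), ∀ a b : ℝ, 0 ≤ a → 0 ≤ b → a + b = 1 →
      g (a • x + b • y) ≤ (a : WithTop ℝ) * g x + (b : WithTop ℝ) * g y)
    (η : ℝ) (hη : 0 < η) (u p z : EuclideanSpace ℝ (Fin n))
    (hp : IsProxPt g η u p) (gp gz : ℝ)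
    (hgp : ((gp : ℝ) : WithTop ℝ) = g p) (hgz : ((gz : ℝ) : WithTop ℝ) = g z) :
    η * gp + ⟪u - p, z - p⟫ ≤ η * gz := by
  have key : ∀ t : ℝ, 0 < t → t ≤ 1 →
      η * gp + ⟪u - p, z - p⟫ ≤ η * gz + t * (‖z - p‖ ^ 2 / 2) := by
    intro t ht ht1
    set zt : EuclideanSpace ℝ (Fin n) := (1 - t) • p + t • z with hzt
    have hconvt := hconv p z (1 - t) t (by linarith) ht.le (by ring)
    rw [← hgp, ← hgz] at hconvt
    have hne : g zt ≠ ⊤ := by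
      intro htop
      rw [← hzt] at hconvt
      rw [htop] at hconvt
      have : ((1 - t : ℝ) : WithTop ℝ) * ((gp : ℝ) : WithTop ℝ) + ((t : ℝ) : WithTop ℝ) * ((gz : ℝ) : WithTop ℝ)
          = (((1 - t) * gp + t * gz : ℝ) : WithTop ℝ) := by
        push_cast
        ring
      rw [this] at hconvt
      exact (WithTop.not_top_le_coe _ hconvt)
    obtain ⟨gzt, hgzt⟩ := WithTop.ne_top_iff_exists.mp hne
    -- convexity in real form
    have hconvR : gzt ≤ (1 - t) * gp + t * gz := by
      rw [← hzt, ← hgzt] at hconvt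
      have : ((1 - t : ℝ) : WithTop ℝ) * ((gp : ℝ) : WithTop ℝ) + ((t : ℝ) : WithTop ℝ) * ((gz : ℝ) : WithTop ℝ)
          = (((1 - t) * gp + t * gz : ℝ) : WithTop ℝ) := by push_cast; ring
      rw [this] at hconvt
      exact_mod_cast hconvt
    -- prox optimality at zt, in real form
    have hopt := hp zt
    rw [← hgp, ← hgzt] at hopt
    have hoptR : η * gp + 1 / 2 * ‖u - p‖ ^ 2 ≤ η * gzt + 1 / 2 * ‖u - zt‖ ^ 2 := by
      have e1 : ((η : ℝ) : WithTop ℝ) * ((gp : ℝ) : WithTop ℝ) + ((1 / 2 * ‖u - p‖ ^ 2 : ℝ) : WithTop ℝ)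
          = ((η * gp + 1 / 2 * ‖u - p‖ ^ 2 : ℝ) : WithTop ℝ) := by push_cast; ring
      have e2 : ((η : ℝ) : WithTop ℝ) * ((gzt : ℝ) : WithTop ℝ) + ((1 / 2 * ‖u - zt‖ ^ 2 : ℝ) : WithTop ℝ)
          = ((η * gzt + 1 / 2 * ‖u - zt‖ ^ 2 : ℝ) : WithTop ℝ) := by push_cast; ring
      rw [e1, e2] at hopt
      exact_mod_cast hopt
    -- expand the norm
    have hz : u - zt = (u - p) - t • (z - p) := by
      rw [hzt]
      module
    have hnorm : ‖u - zt‖ ^ 2 = ‖u - p‖ ^ 2 - 2 * (t * ⟪u - p, z - p⟫) + t ^ 2 * ‖z - p‖ ^ 2 := by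
      rw [hz, norm_sub_sq_real, real_inner_smul_right, norm_smul,
        Real.norm_eq_abs, abs_of_pos ht]
      ring
    rw [hnorm] at hoptR
    -- combine and divide by t
    have hmul : t * (η * gp + ⟪u - p, z - p⟫) ≤ t * (η * gz + t * (‖z - p‖ ^ 2 / 2)) := by
      nlinarith [hoptR, hconvR, ht.le]
    have := le_of_mul_le_mul_left (by linarith [hmul]) ht
    nlinarith [this, sq_nonneg (‖z - p‖), ht1, ht]
  -- pass to the limit t → 0⁺
  apply le_of_forall_pos_le_add
  intro ε hε
  by_cases hC : ‖z - p‖ ^ 2 / 2 = 0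
  · have := key 1 one_pos le_rfl
    rw [hC] at this
    linarith
  · have hCpos : 0 < ‖z - p‖ ^ 2 / 2 := lt_of_le_of_ne (by positivity) (Ne.symm hC)
    set t := min 1 (ε / (‖z - p‖ ^ 2 / 2)) with htdef
    have ht0 : 0 < t := lt_min one_pos (by positivity)
    have ht1 : t ≤ 1 := min_le_left _ _
    have := key t ht0 ht1
    have htc : t * (‖z - p‖ ^ 2 / 2) ≤ ε := by
      calc t * (‖z - p‖ ^ 2 / 2) ≤ (ε / (‖z - p‖ ^ 2 / 2)) * (‖z - p‖ ^ 2 / 2) := by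
            apply mul_le_mul_of_nonneg_right (min_le_right _ _) (by positivity)
        _ = ε := div_mul_cancel₀ ε (ne_of_gt hCpos)
    linarith

lemma coe_comb (a b ga gb : ℝ) :
    (a : WithTop ℝ) * (ga : WithTop ℝ) + (b : WithTop ℝ) * (gb : WithTop ℝ)
      = ((a * ga + b * gb : ℝ) : WithTop ℝ) := by push_cast; ring

lemma dom_convex {n : ℕ} (g : EuclideanSpace ℝ (Fin n) → WithTop ℝ)
    (hconv : ∀ x y : EuclideanSpace ℝ (Fin n), ∀ a b : ℝ, 0 ≤ a → 0 ≤ b → a + b = 1 →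
      g (a • x + b • y) ≤ (a : WithTop ℝ) * g x + (b : WithTop ℝ) * g y)
    (x y : EuclideanSpace ℝ (Fin n)) (gx gy : ℝ)
    (hgx : ((gx : ℝ) : WithTop ℝ) = g x) (hgy : ((gy : ℝ) : WithTop ℝ) = g y)
    (a b : ℝ) (ha : 0 ≤ a) (hb : 0 ≤ b) (hab : a + b = 1) :
    g (a • x + b • y) ≠ ⊤ := by
  have h := hconv x y a b ha hb hab
  rw [← hgx, ← hgy, coe_comb] at h
  exact ne_top_of_le_ne_top WithTop.coe_ne_top h


set_option maxHeartbeats 1000000 in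
/-- expected per-step decrease, key step of Theorem 4: under conditionally
unbiased noisy gradients with conditional second moment `≤ σ²/w²`, if the noisy residual
satisfies `‖P_η^g(Y; G)‖ ≥ δ/w` a.s., then with `Y⁺ = prox_{ηg}(Y − ηG)`,
`E[(S(Y)+g(Y)) − (S(Y⁺)+g(Y⁺)) | 𝒢] ≥ (η/w²)((1 − ηL)δ²/2 − σ²)` a.s.
(The real-valued functions `gY, gYp` record the finite values of `g` along `Y` and `Y⁺`,
expressing that these iterates lie in `dom g`.) -/
theorem stmt10 {n : ℕ} {Ω : Type*} [inst : MeasurableSpace Ω] (μ : Measure Ω)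
    [IsProbabilityMeasure μ] (m : MeasurableSpace Ω) (hm : m ≤ inst)
    (g : EuclideanSpace ℝ (Fin n) → WithTop ℝ) (hg : ProperConvexLsc g)
    (prox : EuclideanSpace ℝ (Fin n) → EuclideanSpace ℝ (Fin n))
    (L η δ σ w : ℝ) (hL : 0 < L) (hη : 0 < η) (hη' : η < 1 / L) (hδ : 0 < δ)
    (hσ : 0 < σ) (hw : 1 ≤ w)
    (hprox : IsProxFun g η prox)
    (S : EuclideanSpace ℝ (Fin n) → ℝ) (S' : EuclideanSpace ℝ (Fin n) → EuclideanSpace ℝ (Fin n))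
    (hgrad : ∀ x, HasGradientAt S (S' x) x) (hS'cont : Continuous S')
    (hsmooth : ∀ x y : EuclideanSpace ℝ (Fin n), g x ≠ ⊤ → g y ≠ ⊤ →
      ‖S' x - S' y‖ ≤ L * ‖x - y‖)
    (Y G : Ω → EuclideanSpace ℝ (Fin n))
    (hYmeas : Measurable[m] Y)
    (hY2 : MemLp Y 2 μ) (hG2 : MemLp G 2 μ) (hSY2 : MemLp (fun ω => S' (Y ω)) 2 μ)
    (hcond : μ[G|m] =ᵐ[μ] fun ω => S' (Y ω))
    (hvar : ∀ᵐ ω ∂μ, (μ[fun ω' => ‖G ω' - S' (Y ω')‖ ^ 2|m]) ω ≤ σ ^ 2 / w ^ 2)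
    (Yp : Ω → EuclideanSpace ℝ (Fin n)) (hYp : ∀ ω, Yp ω = prox (Y ω - η • G ω))
    (hres : ∀ᵐ ω ∂μ, δ / w ≤ ‖proxRes prox η (Y ω) (G ω)‖)
    (gY gYp : Ω → ℝ)
    (hgY : ∀ ω, ((gY ω : ℝ) : WithTop ℝ) = g (Y ω))
    (hgYp : ∀ ω, ((gYp ω : ℝ) : WithTop ℝ) = g (Yp ω))
    (hint1 : Integrable (fun ω => S (Y ω) + gY ω) μ)
    (hint2 : Integrable (fun ω => S (Yp ω) + gYp ω) μ) :
    ∀ᵐ ω ∂μ,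
      η / w ^ 2 * ((1 - η * L) * δ ^ 2 / 2 - σ ^ 2) ≤
        (μ[fun ω' => (S (Y ω') + gY ω') - (S (Yp ω') + gYp ω')|m]) ω := by
  have hηL : η * L < 1 := by
    rw [lt_div_iff₀ hL] at hη'
    linarith
  have h1mL : 0 < 1 - η * L := by linarith
  set K : ℝ := η * (1 - η * L) * δ ^ 2 / (2 * w ^ 2) with hK
  set D : Ω → ℝ := fun ω' => (S (Y ω') + gY ω') - (S (Yp ω') + gYp ω') with hD
  -- pointwise deterministic decrease
  have hpt : ∀ ω, η * (1 - η * L) / 2 * ‖proxRes prox η (Y ω) (G ω)‖ ^ 2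
      - η / 2 * ‖G ω - S' (Y ω)‖ ^ 2 ≤ D ω := by
    intro ω
    set x := Y ω with hx
    set d := G ω with hd
    set u := x - η • d with hu
    set xp := Yp ω with hxp
    have hxp' : xp = prox u := hYp ω
    set pv := proxRes prox η x d with hpv
    have hxxp : x - xp = η • pv := by
      rw [hpv, proxRes, ← hu, ← hxp', smul_smul, mul_inv_cancel₀ (ne_of_gt hη), one_smul]
    have hA : η * gYp ω + ⟪u - xp, x - xp⟫ ≤ η * gY ω := by
      refine prox_ineq g hg.2.2 η hη u xp x ?_ (gYp ω) (gY ω) (hgYp ω) (hgY ω)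
      rw [hxp']
      exact (hprox u).1
    have husub : u - xp = η • pv - η • d := by
      rw [hu, ← hxxp]
      module
    have hinner : ⟪u - xp, x - xp⟫ = η ^ 2 * ‖pv‖ ^ 2 - η ^ 2 * ⟪d, pv⟫ := by
      rw [husub, hxxp, inner_sub_left, real_inner_smul_left, real_inner_smul_left,
        real_inner_smul_right, real_inner_smul_right, real_inner_self_eq_norm_sq]
      ring
    have hdom_x : g x ≠ ⊤ := by rw [← hgY ω]; exact WithTop.coe_ne_top
    have hLipseg : ∀ t ∈ Set.Icc (0:ℝ) 1,
        ‖S' (x + t • (xp - x)) - S' x‖ ≤ L * (t * ‖xp - x‖) := by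
      intro t ht
      have hzt : x + t • (xp - x) = (1 - t) • x + t • xp := by module
      have hdom : g (x + t • (xp - x)) ≠ ⊤ := by
        rw [hzt]
        exact dom_convex g hg.2.2 x xp (gY ω) (gYp ω) (hgY ω) (hgYp ω) (1 - t) t
          (by linarith [ht.2]) ht.1 (by ring)
      have := hsmooth (x + t • (xp - x)) x hdom hdom_x
      calc ‖S' (x + t • (xp - x)) - S' x‖ ≤ L * ‖x + t • (xp - x) - x‖ := this
        _ = L * (t * ‖xp - x‖) := by
            rw [add_sub_cancel_left, norm_smul, Real.norm_eq_abs, abs_of_nonneg ht.1]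
    have hB := descent_lemma S S' hgrad hS'cont L x xp hLipseg
    have hxpmx : xp - x = -(η • pv) := by
      rw [← hxxp]
      abel
    have hin2 : ⟪S' x, xp - x⟫ = -(η * ⟪S' x, pv⟫) := by
      rw [hxpmx, inner_neg_right, real_inner_smul_right]
    have hn2 : ‖xp - x‖ ^ 2 = η ^ 2 * ‖pv‖ ^ 2 := by
      rw [hxpmx, norm_neg, norm_smul, Real.norm_eq_abs, abs_of_pos hη]
      ring
    rw [hin2, hn2] at hB
    have hA' : gYp ω + (η * ‖pv‖ ^ 2 - η * ⟪d, pv⟫) ≤ gY ω := by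
      rw [hinner] at hA
      have hmul : η * (gYp ω + (η * ‖pv‖ ^ 2 - η * ⟪d, pv⟫)) ≤ η * gY ω := by
        nlinarith [hA]
      exact le_of_mul_le_mul_left hmul hη
    have hY1 : ⟪d - S' x, pv⟫ ≤ ‖d - S' x‖ * ‖pv‖ := real_inner_le_norm _ _
    have hy2 : ‖d - S' x‖ * ‖pv‖ ≤ (‖d - S' x‖ ^ 2 + ‖pv‖ ^ 2) / 2 := by
      nlinarith [sq_nonneg (‖d - S' x‖ - ‖pv‖)]
    have hy3 : η * ⟪d - S' x, pv⟫ ≤ η * ((‖d - S' x‖ ^ 2 + ‖pv‖ ^ 2) / 2) :=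
      mul_le_mul_of_nonneg_left (le_trans hY1 hy2) hη.le
    have hsplit' : η * ⟪d - S' x, pv⟫ = η * ⟪d, pv⟫ - η * ⟪S' x, pv⟫ := by
      rw [inner_sub_left]
      ring
    show η * (1 - η * L) / 2 * ‖pv‖ ^ 2 - η / 2 * ‖d - S' x‖ ^ 2
        ≤ (S x + gY ω) - (S xp + gYp ω)
    nlinarith [hA', hB, hy3, hsplit', hη.le]
  -- integrability
  have hIe : Integrable (fun ω => ‖G ω - S' (Y ω)‖ ^ 2) μ := by
    have h2 := (hG2.sub hSY2).integrable_norm_rpow (by norm_num) (by norm_num)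
    refine h2.congr (Filter.Eventually.of_forall fun ω => ?_)
    simp
  have hDint : Integrable D μ := hint1.sub hint2
  set B : Ω → ℝ := fun ω => K - η / 2 * ‖G ω - S' (Y ω)‖ ^ 2 with hBdef
  have hBint : Integrable B μ := (integrable_const K).sub (hIe.const_mul (η / 2))
  have hBD : B ≤ᵐ[μ] D := by
    filter_upwards [hres] with ω hres'
    have hpw : δ ^ 2 / w ^ 2 ≤ ‖proxRes prox η (Y ω) (G ω)‖ ^ 2 := by
      have h0 : (0:ℝ) ≤ δ / w := by positivity
      calc δ ^ 2 / w ^ 2 = (δ / w) ^ 2 := by rw [div_pow]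
        _ ≤ _ := by nlinarith [hres', h0]
    have hc1 : (0:ℝ) ≤ η * (1 - η * L) / 2 :=
      div_nonneg (mul_nonneg hη.le h1mL.le) (by norm_num)
    have hKle : K ≤ η * (1 - η * L) / 2 * ‖proxRes prox η (Y ω) (G ω)‖ ^ 2 := by
      have := mul_le_mul_of_nonneg_left hpw hc1
      have hKeq : K = η * (1 - η * L) / 2 * (δ ^ 2 / w ^ 2) := by
        rw [hK]
        field_simp
      linarith [hKeq ▸ this]
    have := hpt ω
    simp only [hBdef]
    linarith
  have hcm := condExp_mono (m := m) hBint hDint hBD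
  -- conditional expectation of B
  have hBeq : B = (fun _ => K) - ((η / 2) • fun ω => ‖G ω - S' (Y ω)‖ ^ 2) := by
    funext ω
    simp [hBdef]
  have h1 := condExp_sub (m := m) (μ := μ) (integrable_const K)
    ((hIe.smul (η / 2)) : Integrable ((η / 2) • fun ω => ‖G ω - S' (Y ω)‖ ^ 2) μ)
  have h2 := condExp_smul (m := m) (m₀ := inst) (μ := μ) (η / 2 : ℝ)
    (fun ω => ‖G ω - S' (Y ω)‖ ^ 2)
  have heqB : μ[B|m] =ᵐ[μ]
      fun ω => K - η / 2 * ((μ[fun ω' => ‖G ω' - S' (Y ω')‖ ^ 2|m]) ω) := by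
    rw [hBeq]
    filter_upwards [h1, h2] with ω hω1 hω2
    rw [hω1]
    simp only [Pi.sub_apply, Pi.smul_apply, smul_eq_mul] at hω2 ⊢
    rw [hω2, condExp_const hm K]
  -- finish
  filter_upwards [hcm, heqB, hvar] with ω hω1 hω2 hω3
  have hstep : K - η / 2 * (σ ^ 2 / w ^ 2) ≤ (μ[D|m]) ω := by
    have hmul : η / 2 * ((μ[fun ω' => ‖G ω' - S' (Y ω')‖ ^ 2|m]) ω) ≤ η / 2 * (σ ^ 2 / w ^ 2) :=
      mul_le_mul_of_nonneg_left hω3 (by positivity)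
    rw [hω2] at hω1
    linarith
  have hscal : η / w ^ 2 * ((1 - η * L) * δ ^ 2 / 2 - σ ^ 2) ≤ K - η / 2 * (σ ^ 2 / w ^ 2) := by
    have hw2 : (0:ℝ) < w ^ 2 := by positivity
    have e1 : η / w ^ 2 * ((1 - η * L) * δ ^ 2 / 2 - σ ^ 2)
        = (η * (1 - η * L) * δ ^ 2 / 2 - η * σ ^ 2) / w ^ 2 := by
      field_simp
    have e2 : K - η / 2 * (σ ^ 2 / w ^ 2)
        = (η * (1 - η * L) * δ ^ 2 / 2 - η * σ ^ 2 / 2) / w ^ 2 := by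
      rw [hK]
      field_simp
    rw [e1, e2]
    gcongr
    nlinarith [mul_nonneg hη.le (sq_nonneg σ)]
  linarith
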